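/- In A(p) every invertible element has a logarithm: e^{A(p)} = A(p)^{-1}. That is, g ∈ A(p) is invertible with respect to ∗ if and only if there exists f ∈ A(p) with e^f = g, where e^f := ∑_{n=0}^∞ f^{∗n}/n! is the exponential in the Banach algebra A(p). -/

import Mathlib

open scoped BigOperators

/-- A weight: a sequence of positive reals. -/
structure GoodWeight : Type where
  p : ℕ → ℝ
  pos : ∀ n, 0 < p n

namespace GoodWeight

/-- The growth condition `lim_{n→∞} p(n)^(1/n) = ∞`. -/
def Grows (w : GoodWeight) : Prop :=
  Filter.Tendsto (fun n : ℕ => w.p n ^ ((n : ℝ)⁻¹)) Filter.atTop Filter.atTop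

/-- The Banach algebra `A(p)`, in its sequence model: a sequence `a : ℕ → ℂ` (the
Taylor coefficients at `0` of the corresponding entire function) such that
`sup_n p(n)|a(n)| < ∞`. -/
def Ap (w : GoodWeight) : Type :=
  {a : ℕ → ℂ // ∃ C : ℝ, ∀ n, w.p n * ‖a n‖ ≤ C}

namespace Ap

variable {w : GoodWeight}

instance : Zero w.Ap :=
  ⟨⟨fun _ => 0, 0, fun n => by simp⟩⟩

instance : Add w.Ap :=
  ⟨fun a b =>
    ⟨fun n => a.1 n + b.1 n, by
      obtain ⟨C, hC⟩ := a.2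
      obtain ⟨D, hD⟩ := b.2
      refine ⟨C + D, fun n => ?_⟩
      have h1 : ‖a.1 n + b.1 n‖ ≤ ‖a.1 n‖ + ‖b.1 n‖ :=
        norm_add_le _ _
      calc w.p n * ‖a.1 n + b.1 n‖
          ≤ w.p n * ‖a.1 n‖ + w.p n * ‖b.1 n‖ := by
            rw [← mul_add]; exact mul_le_mul_of_nonneg_left h1 (w.pos n).le
        _ ≤ C + D := add_le_add (hC n) (hD n)⟩⟩

instance : Neg w.Ap :=
  ⟨fun a =>
    ⟨fun n => -a.1 n, by
      obtain ⟨C, hC⟩ := a.2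
      exact ⟨C, fun n => by simpa using hC n⟩⟩⟩

/-- The weighted Hadamard multiplication `(f ∗ g)(n) = p(n) f̂(n) ĝ(n)`. -/
instance : Mul w.Ap :=
  ⟨fun a b =>
    ⟨fun n => (w.p n : ℂ) * a.1 n * b.1 n, by
      obtain ⟨C, hC⟩ := a.2
      obtain ⟨D, hD⟩ := b.2
      refine ⟨C * D, fun n => ?_⟩
      have e : w.p n * ‖(w.p n : ℂ) * a.1 n * b.1 n‖
          = (w.p n * ‖a.1 n‖) * (w.p n * ‖b.1 n‖) := by
        rw [norm_mul, norm_mul, Complex.norm_real, Real.norm_eq_abs, abs_of_pos (w.pos n)]; ring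
      rw [e]
      have h0C : (0:ℝ) ≤ C :=
        le_trans (mul_nonneg (w.pos 0).le (norm_nonneg _)) (hC 0)
      exact mul_le_mul (hC n) (hD n) (mul_nonneg (w.pos n).le (norm_nonneg _)) h0C⟩⟩

/-- The identity element `ε`, with coefficients `1/p(n)`. -/
noncomputable instance : One w.Ap :=
  ⟨⟨fun n => ((w.p n : ℂ))⁻¹, 1, fun n => by
      rw [norm_inv, Complex.norm_real, Real.norm_eq_abs, abs_of_pos (w.pos n),
        mul_inv_cancel₀ (w.pos n).ne']⟩⟩

instance : SMul ℂ w.Ap :=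
  ⟨fun c a =>
    ⟨fun n => c * a.1 n, by
      obtain ⟨C, hC⟩ := a.2
      refine ⟨‖c‖ * C, fun n => ?_⟩
      rw [norm_mul]
      calc w.p n * (‖c‖ * ‖a.1 n‖)
          = ‖c‖ * (w.p n * ‖a.1 n‖) := by ring
        _ ≤ ‖c‖ * C := mul_le_mul_of_nonneg_left (hC n) (norm_nonneg c)⟩⟩

noncomputable instance : CommRing w.Ap where
  add := (· + ·)
  add_assoc a b c := Subtype.ext (funext fun n => add_assoc _ _ _)
  zero := 0
  zero_add a := Subtype.ext (funext fun n => zero_add _)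
  add_zero a := Subtype.ext (funext fun n => add_zero _)
  add_comm a b := Subtype.ext (funext fun n => add_comm _ _)
  nsmul := nsmulRec
  zsmul := zsmulRec
  mul := (· * ·)
  mul_assoc a b c := Subtype.ext (funext fun n => by
    show (w.p n : ℂ) * ((w.p n : ℂ) * a.1 n * b.1 n) * c.1 n
        = (w.p n : ℂ) * a.1 n * ((w.p n : ℂ) * b.1 n * c.1 n)
    ring)
  one := 1
  one_mul a := Subtype.ext (funext fun n => by
    show (w.p n : ℂ) * ((w.p n : ℂ))⁻¹ * a.1 n = a.1 n
    have h : ((w.p n : ℝ) : ℂ) ≠ 0 := by exact_mod_cast (w.pos n).ne'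
    rw [mul_inv_cancel₀ h, one_mul])
  mul_one a := Subtype.ext (funext fun n => by
    show (w.p n : ℂ) * a.1 n * ((w.p n : ℂ))⁻¹ = a.1 n
    have h : ((w.p n : ℝ) : ℂ) ≠ 0 := by exact_mod_cast (w.pos n).ne'
    field_simp)
  left_distrib a b c := Subtype.ext (funext fun n => by
    show (w.p n : ℂ) * a.1 n * (b.1 n + c.1 n)
        = (w.p n : ℂ) * a.1 n * b.1 n + (w.p n : ℂ) * a.1 n * c.1 n
    ring)
  right_distrib a b c := Subtype.ext (funext fun n => by
    show (w.p n : ℂ) * (a.1 n + b.1 n) * c.1 n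
        = (w.p n : ℂ) * a.1 n * c.1 n + (w.p n : ℂ) * b.1 n * c.1 n
    ring)
  zero_mul a := Subtype.ext (funext fun n => by
    show (w.p n : ℂ) * 0 * a.1 n = 0
    ring)
  mul_zero a := Subtype.ext (funext fun n => by
    show (w.p n : ℂ) * a.1 n * 0 = 0
    ring)
  mul_comm a b := Subtype.ext (funext fun n => by
    show (w.p n : ℂ) * a.1 n * b.1 n = (w.p n : ℂ) * b.1 n * a.1 n
    ring)
  neg := Neg.neg
  neg_add_cancel a := Subtype.ext (funext fun n => neg_add_cancel _)

instance : Module ℂ w.Ap where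
  smul := (· • ·)
  one_smul a := Subtype.ext (funext fun n => by
    show (1 : ℂ) * a.1 n = a.1 n
    ring)
  mul_smul c d a := Subtype.ext (funext fun n => by
    show (c * d) * a.1 n = c * (d * a.1 n)
    ring)
  smul_zero c := Subtype.ext (funext fun n => by
    show c * 0 = 0
    ring)
  smul_add c a b := Subtype.ext (funext fun n => by
    show c * (a.1 n + b.1 n) = c * a.1 n + c * b.1 n
    ring)
  add_smul c d a := Subtype.ext (funext fun n => by
    show (c + d) * a.1 n = c * a.1 n + d * a.1 n
    ring)
  zero_smul a := Subtype.ext (funext fun n => by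
    show (0 : ℂ) * a.1 n = 0
    ring)

noncomputable instance : Algebra ℂ w.Ap :=
  Algebra.ofModule
    (fun c a b => Subtype.ext (funext fun n => by
      show (w.p n : ℂ) * (c * a.1 n) * b.1 n = c * ((w.p n : ℂ) * a.1 n * b.1 n)
      ring))
    (fun c a b => Subtype.ext (funext fun n => by
      show (w.p n : ℂ) * a.1 n * (c * b.1 n) = c * ((w.p n : ℂ) * a.1 n * b.1 n)
      ring))

theorem bddAbove (a : w.Ap) :
    BddAbove (Set.range fun n => w.p n * ‖a.1 n‖) := by
  obtain ⟨C, hC⟩ := a.2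
  exact ⟨C, by rintro x ⟨k, rfl⟩; exact hC k⟩

/-- The norm `‖f‖ = sup_n p(n) |f̂(n)|`, as an `AddGroupNorm`. -/
noncomputable def gnorm (w : GoodWeight) : AddGroupNorm w.Ap where
  toFun a := ⨆ n, w.p n * ‖a.1 n‖
  map_zero' := by
    have h : ∀ n : ℕ, w.p n * ‖(0 : w.Ap).1 n‖ = 0 := fun n => by
      show w.p n * ‖(0:ℂ)‖ = 0; simp
    simp [h]
  add_le' a b := by
    apply ciSup_le
    intro n
    have h1 : ‖a.1 n + b.1 n‖ ≤ ‖a.1 n‖ + ‖b.1 n‖ :=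
      norm_add_le _ _
    calc w.p n * ‖(a + b).1 n‖
        ≤ w.p n * ‖a.1 n‖ + w.p n * ‖b.1 n‖ := by
          rw [← mul_add]; exact mul_le_mul_of_nonneg_left h1 (w.pos n).le
      _ ≤ (⨆ k, w.p k * ‖a.1 k‖) + ⨆ k, w.p k * ‖b.1 k‖ :=
          add_le_add (le_ciSup (bddAbove a) n) (le_ciSup (bddAbove b) n)
  neg' a := by
    have h : (fun n => w.p n * ‖(-a).1 n‖)
        = fun n => w.p n * ‖a.1 n‖ := by
      funext n
      show w.p n * ‖-a.1 n‖ = w.p n * ‖a.1 n‖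
      rw [norm_neg]
    show (⨆ n, w.p n * ‖(-a).1 n‖) = ⨆ n, w.p n * ‖a.1 n‖
    rw [h]
  eq_zero_of_map_eq_zero' a h := by
    apply Subtype.ext
    funext n
    have h1 : w.p n * ‖a.1 n‖ ≤ 0 := h ▸ le_ciSup (bddAbove a) n
    have h2 : (0:ℝ) ≤ w.p n * ‖a.1 n‖ :=
      mul_nonneg (w.pos n).le (norm_nonneg _)
    have h3 : ‖a.1 n‖ = 0 := by
      rcases mul_eq_zero.mp (le_antisymm h1 h2) with h' | h'
      · exact absurd h' (w.pos n).ne'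
      · exact h'
    exact norm_eq_zero.mp h3

noncomputable instance : NormedAddCommGroup w.Ap :=
  (gnorm w).toNormedAddCommGroup

theorem norm_def (a : w.Ap) : ‖a‖ = ⨆ n, w.p n * ‖a.1 n‖ := rfl

theorem le_norm (a : w.Ap) (n : ℕ) : w.p n * ‖a.1 n‖ ≤ ‖a‖ :=
  le_ciSup (bddAbove a) n

theorem norm_nonneg' (a : w.Ap) : 0 ≤ ‖a‖ :=
  le_trans (mul_nonneg (w.pos 0).le (norm_nonneg _)) (le_norm a 0)

noncomputable instance : NormedCommRing w.Ap :=
  { (inferInstance : NormedAddCommGroup w.Ap), (inferInstance : CommRing w.Ap) with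
    norm_mul_le := by
      intro a b
      apply ciSup_le
      intro n
      have e : w.p n * ‖(a * b).1 n‖
          = (w.p n * ‖a.1 n‖) * (w.p n * ‖b.1 n‖) := by
        show w.p n * ‖(w.p n : ℂ) * a.1 n * b.1 n‖ = _
        rw [norm_mul, norm_mul, Complex.norm_real, Real.norm_eq_abs, abs_of_pos (w.pos n)]; ring
      rw [e]
      exact mul_le_mul (le_norm a n) (le_norm b n)
        (mul_nonneg (w.pos n).le (norm_nonneg _)) (norm_nonneg' a) }

noncomputable instance : NormedSpace ℂ w.Ap where
  norm_smul_le c a := by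
    apply ciSup_le
    intro n
    have e : w.p n * ‖(c • a).1 n‖
        = ‖c‖ * (w.p n * ‖a.1 n‖) := by
      show w.p n * ‖c * a.1 n‖ = _
      rw [norm_mul]; ring
    rw [e]
    calc ‖c‖ * (w.p n * ‖a.1 n‖)
        ≤ ‖c‖ * ‖a‖ := mul_le_mul_of_nonneg_left (le_norm a n) (norm_nonneg c)
      _ = ‖c‖ * ‖a‖ := rfl

noncomputable instance : NormedAlgebra ℂ w.Ap :=
  { (inferInstance : Algebra ℂ w.Ap) with
    norm_smul_le := fun c a => norm_smul_le c a }

end Ap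

end GoodWeight




namespace GoodWeight.Ap

variable {w : GoodWeight}

theorem mul_coeff (a b : w.Ap) (n : ℕ) :
    (a * b).1 n = (w.p n : ℂ) * a.1 n * b.1 n := rfl

theorem one_coeff (n : ℕ) : (1 : w.Ap).1 n = ((w.p n : ℂ))⁻¹ := rfl

theorem smul_coeff (c : ℂ) (a : w.Ap) (n : ℕ) : (c • a).1 n = c * a.1 n := rfl

theorem pNe (m : ℕ) : ((w.p m : ℝ) : ℂ) ≠ 0 := by exact_mod_cast (w.pos m).ne'

theorem pow_coeff (f : w.Ap) (n m : ℕ) :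
    (f ^ n).1 m = ((w.p m : ℂ) * f.1 m) ^ n / (w.p m : ℂ) := by
  induction n with
  | zero => simp [one_coeff]
  | succ n ih =>
      rw [pow_succ, mul_coeff, ih]
      have hp : ((w.p m : ℝ) : ℂ) ≠ 0 := pNe m
      field_simp
      ring

/-- Coefficient evaluation as an additive monoid hom. -/
def coeffHom (m : ℕ) : w.Ap →+ ℂ where
  toFun a := a.1 m
  map_zero' := rfl
  map_add' _ _ := rfl

theorem abs_z_le (f : w.Ap) (m : ℕ) :
    ‖(w.p m : ℂ) * f.1 m‖ ≤ ‖f‖ := by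
  rw [norm_mul, Complex.norm_real, Real.norm_eq_abs, abs_of_pos (w.pos m)]
  exact le_norm f m

/-- The exponential of `f`, computed coefficientwise: `exp(f)(m) = e^{p(m) f(m)} / p(m)`. -/
noncomputable def expAp (f : w.Ap) : w.Ap :=
  ⟨fun m => Complex.exp ((w.p m : ℂ) * f.1 m) / (w.p m : ℂ), by
    refine ⟨Real.exp ‖f‖, fun m => ?_⟩
    rw [norm_div, Complex.norm_real, Real.norm_eq_abs, abs_of_pos (w.pos m),
      mul_div_cancel₀ _ (w.pos m).ne']
    rw [Complex.norm_exp]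
    refine Real.exp_le_exp.2 (le_trans (Complex.re_le_norm _) ?_)
    exact abs_z_le f m⟩

theorem hasSum_exp (f : w.Ap) :
    HasSum (fun n : ℕ => ((n.factorial : ℂ))⁻¹ • f ^ n) (expAp f) := by
  rw [HasSum, ← tendsto_sub_nhds_zero_iff]
  apply squeeze_zero_norm ?_
    (tendsto_tsum_compl_atTop_zero (fun n : ℕ => ‖f‖ ^ n / n.factorial))
  · intro s
    have hT0 : 0 ≤ ∑' n : {x : ℕ // x ∉ s}, ‖f‖ ^ (n : ℕ) / (n : ℕ).factorial :=
      tsum_nonneg fun n => div_nonneg (pow_nonneg (norm_nonneg f) _) (Nat.cast_nonneg _)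
    apply ciSup_le
    intro m
    set z : ℂ := (w.p m : ℂ) * f.1 m with hz
    have hp : ((w.p m : ℝ) : ℂ) ≠ 0 := pNe m
    have hsum : Summable (fun n : ℕ => z ^ n / n.factorial) :=
      NormedSpace.expSeries_div_summable z
    have hcoef : ((∑ n ∈ s, ((n.factorial : ℂ))⁻¹ • f ^ n) - expAp f).1 m
        = ((∑ n ∈ s, z ^ n / n.factorial) - Complex.exp z) / (w.p m : ℂ) := by
      have h1 : ((∑ n ∈ s, ((n.factorial : ℂ))⁻¹ • f ^ n) - expAp f).1 m
          = coeffHom m ((∑ n ∈ s, ((n.factorial : ℂ))⁻¹ • f ^ n) - expAp f) := rfl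
      rw [h1, map_sub, map_sum]
      have h2 : ∀ n ∈ s, coeffHom m (((n.factorial : ℂ))⁻¹ • f ^ n)
          = (z ^ n / n.factorial) / (w.p m : ℂ) := by
        intro n _
        show (((n.factorial : ℂ))⁻¹ • f ^ n).1 m = _
        rw [smul_coeff, pow_coeff]
        field_simp
        rfl
      rw [Finset.sum_congr rfl h2]
      show _ - (expAp f).1 m = _
      rw [expAp, ← Finset.sum_div]
      simp [sub_div]
      rfl
    have hnorm : w.p m * ‖
        (((∑ n ∈ s, ((n.factorial : ℂ))⁻¹ • f ^ n) - expAp f).1 m)‖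
        = ‖(∑ n ∈ s, z ^ n / n.factorial) - Complex.exp z‖ := by
      rw [hcoef, norm_div, Complex.norm_real, Real.norm_eq_abs, abs_of_pos (w.pos m),
        mul_comm, div_mul_cancel₀ _ (w.pos m).ne']
    rw [norm_def, hnorm]
    have hexp : Complex.exp z = ∑' n : ℕ, z ^ n / n.factorial := by
      rw [Complex.exp_eq_exp_ℂ, NormedSpace.exp_eq_tsum_div]
    have hsplit : (∑ n ∈ s, z ^ n / n.factorial)
        + ∑' n : ↑((s : Set ℕ)ᶜ), z ^ (n : ℕ) / ((n : ℕ)).factorial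
        = ∑' n : ℕ, z ^ n / n.factorial := hsum.sum_add_tsum_compl
    have heq : (∑ n ∈ s, z ^ n / n.factorial) - Complex.exp z
        = -(∑' n : ↑((s : Set ℕ)ᶜ), z ^ (n : ℕ) / ((n : ℕ)).factorial) := by
      rw [hexp, ← hsplit]; ring
    rw [heq, norm_neg]
    calc ‖∑' n : ↑((s : Set ℕ)ᶜ), z ^ (n : ℕ) / ((n : ℕ)).factorial‖
        ≤ ∑' n : ↑((s : Set ℕ)ᶜ), ‖z ^ (n : ℕ) / (((n : ℕ)).factorial : ℂ)‖ := by
          exact norm_tsum_le_tsum_norm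
            ((NormedSpace.norm_expSeries_div_summable z).subtype _)
      _ ≤ ∑' n : ↑((s : Set ℕ)ᶜ), ‖f‖ ^ (n : ℕ) / ((n : ℕ)).factorial := by
          apply Summable.tsum_le_tsum
          · intro n
            rw [norm_div, norm_pow, Complex.norm_natCast]
            gcongr
            exact le_trans (GoodWeight.Ap.abs_z_le f m) le_rfl
          · exact (NormedSpace.norm_expSeries_div_summable z).subtype _
          · exact (Real.summable_pow_div_factorial ‖f‖).subtype _
      _ = ∑' n : {x : ℕ // x ∉ s}, ‖f‖ ^ (n : ℕ) / ((n : ℕ)).factorial := by rfl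

set_option synthInstance.maxHeartbeats 1000000 in
instance : T2Space w.Ap := inferInstance

theorem isUnit_expAp (f : w.Ap) : IsUnit (expAp f) := by
  refine IsUnit.of_mul_eq_one (a := _)
    ⟨fun m => Complex.exp (-((w.p m : ℂ) * f.1 m)) / (w.p m : ℂ), ?_⟩ ?_
  · refine ⟨Real.exp ‖f‖, fun m => ?_⟩
    rw [norm_div, Complex.norm_real, Real.norm_eq_abs, abs_of_pos (w.pos m),
      mul_div_cancel₀ _ (w.pos m).ne', Complex.norm_exp]
    refine Real.exp_le_exp.2 ?_
    have := Complex.abs_re_le_norm (-((w.p m : ℂ) * f.1 m))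
    have h2 := abs_z_le f m
    rw [norm_neg] at this
    calc (-((w.p m : ℂ) * f.1 m)).re ≤ |(-((w.p m : ℂ) * f.1 m)).re| := le_abs_self _
      _ ≤ ‖(w.p m : ℂ) * f.1 m‖ := this
      _ ≤ ‖f‖ := h2
  · apply Subtype.ext; funext m
    show (w.p m : ℂ) * ((expAp f).1 m) * _ = ((w.p m : ℂ))⁻¹
    rw [expAp]
    have hp : ((w.p m : ℝ) : ℂ) ≠ 0 := pNe m
    simp only []
    have hE : Complex.exp ((w.p m : ℂ) * f.1 m) * Complex.exp (-((w.p m : ℂ) * f.1 m)) = 1 := by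
      rw [← Complex.exp_add, add_neg_cancel, Complex.exp_zero]
    field_simp
    linear_combination hE

end GoodWeight.Ap


/-- `e^{A(p)} = A(p)⁻¹`: an element of `A(p)` is invertible iff it is the
exponential `e^f = ∑ f^{∗n}/n!` of some `f ∈ A(p)`. -/
theorem exp_eq_units (w : GoodWeight) (hg : w.Grows) (g : w.Ap) :
    IsUnit g ↔ ∃ f : w.Ap, (∑' n : ℕ, (n.factorial : ℂ)⁻¹ • f ^ n) = g := by
  constructor
  · intro hu
    obtain ⟨h, hh⟩ := hu.exists_right_inv
    set u : ℕ → ℂ := fun m => (w.p m : ℂ) * g.1 m with hu'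
    have hinv : ∀ m, u m * ((w.p m : ℂ) * h.1 m) = 1 := by
      intro m
      have := congrArg (fun a => (w.p m : ℂ) * (GoodWeight.Ap.coeffHom m) a) hh
      simp only [GoodWeight.Ap.coeffHom, AddMonoidHom.coe_mk, ZeroHom.coe_mk] at this
      rw [GoodWeight.Ap.mul_coeff, GoodWeight.Ap.one_coeff] at this
      rw [hu']
      have hp : ((w.p m : ℝ) : ℂ) ≠ 0 := GoodWeight.Ap.pNe m
      field_simp at this ⊢
      linear_combination this
    have hune : ∀ m, u m ≠ 0 := fun m => left_ne_zero_of_mul_eq_one (hinv m)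
    have habs_le : ∀ m, ‖u m‖ ≤ ‖g‖ := fun m => GoodWeight.Ap.abs_z_le g m
    have habs_inv : ∀ m, (‖u m‖)⁻¹ ≤ ‖h‖ := by
      intro m
      have : (u m)⁻¹ = (w.p m : ℂ) * h.1 m := eq_inv_of_mul_eq_one_left (by
        rw [mul_comm]; exact hinv m) |>.symm
      calc (‖u m‖)⁻¹ = ‖(u m)⁻¹‖ := (norm_inv _).symm
        _ = ‖(w.p m : ℂ) * h.1 m‖ := by rw [this]
        _ ≤ ‖h‖ := GoodWeight.Ap.abs_z_le h m
    set C : ℝ := |Real.log ‖g‖| + |Real.log ‖h‖| + Real.pi with hC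
    have hbound : ∀ m, ‖Complex.log (u m)‖ ≤ C := by
      intro m
      have hpos : 0 < ‖u m‖ := by
        simpa [norm_pos_iff] using hune m
      have h1 : ‖Complex.log (u m)‖
          ≤ |(Complex.log (u m)).re| + |(Complex.log (u m)).im| :=
        Complex.norm_le_abs_re_add_abs_im _
      have hre : |(Complex.log (u m)).re| ≤ |Real.log ‖g‖| + |Real.log ‖h‖| := by
        rw [Complex.log_re]
        rcases abs_le.1 (le_refl |Real.log (‖u m‖)|) with _
        apply abs_le.2
        constructor
        · have h2 : Real.log ((‖u m‖)⁻¹) ≤ Real.log ‖h‖ := by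
            by_cases hh0 : ‖h‖ = 0
            · exfalso
              have := habs_inv m
              rw [hh0] at this
              exact absurd (le_antisymm this (inv_nonneg.2 hpos.le)) (inv_ne_zero hpos.ne')
            · exact Real.log_le_log (inv_pos.2 hpos) (habs_inv m)
          rw [Real.log_inv] at h2
          calc -(|Real.log ‖g‖| + |Real.log ‖h‖|) ≤ -|Real.log ‖h‖| := by
                have : 0 ≤ |Real.log ‖g‖| := abs_nonneg _
                linarith
            _ ≤ -Real.log ‖h‖ := neg_le_neg (le_abs_self _)
            _ ≤ Real.log (‖u m‖) := by linarith
        · calc Real.log (‖u m‖) ≤ Real.log ‖g‖ :=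
              Real.log_le_log hpos (habs_le m)
            _ ≤ |Real.log ‖g‖| := le_abs_self _
            _ ≤ |Real.log ‖g‖| + |Real.log ‖h‖| := by
                have : 0 ≤ |Real.log ‖h‖| := abs_nonneg _
                linarith
      have him : |(Complex.log (u m)).im| ≤ Real.pi := by
        rw [Complex.log_im]
        exact Complex.abs_arg_le_pi _
      calc ‖Complex.log (u m)‖
          ≤ |(Complex.log (u m)).re| + |(Complex.log (u m)).im| := h1
        _ ≤ (|Real.log ‖g‖| + |Real.log ‖h‖|) + Real.pi := add_le_add hre him
        _ = C := by rw [hC]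
    refine ⟨⟨fun m => Complex.log (u m) / (w.p m : ℂ), ⟨C, fun m => ?_⟩⟩, ?_⟩
    · rw [norm_div, Complex.norm_real, Real.norm_eq_abs, abs_of_pos (w.pos m), mul_comm,
        div_mul_cancel₀ _ (w.pos m).ne']
      exact hbound m
    · set f : w.Ap := ⟨fun m => Complex.log (u m) / (w.p m : ℂ), ⟨C, by
        intro m
        rw [norm_div, Complex.norm_real, Real.norm_eq_abs, abs_of_pos (w.pos m), mul_comm,
          div_mul_cancel₀ _ (w.pos m).ne']
        exact hbound m⟩⟩
      rw [(GoodWeight.Ap.hasSum_exp f).tsum_eq]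
      apply Subtype.ext; funext m
      show Complex.exp ((w.p m : ℂ) * f.1 m) / (w.p m : ℂ) = g.1 m
      have hp : ((w.p m : ℝ) : ℂ) ≠ 0 := GoodWeight.Ap.pNe m
      have hf : (w.p m : ℂ) * f.1 m = Complex.log (u m) := by
        show (w.p m : ℂ) * (Complex.log (u m) / (w.p m : ℂ)) = _
        field_simp
      rw [hf, Complex.exp_log (hune m), hu']
      field_simp
  · rintro ⟨f, rfl⟩
    rw [(GoodWeight.Ap.hasSum_exp f).tsum_eq]
    exact GoodWeight.Ap.isUnit_expAp f
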